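/- Let V = E₀ ⊕ ⋯ ⊕ E_s be a direct-sum decomposition of V into nonzero subspaces with s ≥ 1 and dim E₀ = 1, let κ = κ(E₀,…,E_s), and let 1 ≤ i ≤ s. Let x̄, ȳ ∈ P(V) ∖ P(V⁰) and r > 0 satisfy gᵏ(x̄) = gᵏ(ȳ) for all 0 ≤ k ≤ i−1 and |gⁱ(x̄) − gⁱ(ȳ)| ≤ r. Then d(P_{(Vⁱ)^⊥} x̄, P_{(Vⁱ)^⊥} ȳ) ≤ s³ · 2^{3+s} · ‖g(x̄)‖_∞ · κ^{-2s-2} · r (for i = s interpret P_{(Vⁱ)^⊥} as the identity). -/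

import Mathlib

open scoped RealInnerProductSpace
open Filter

variable {V : Type*} [NormedAddCommGroup V] [InnerProductSpace ℝ V]

/-- The projective distance between the lines spanned by two nonzero vectors:
`d(x̄, ȳ) = (1 − ⟨x,y⟫²/(|x|²|y|²))^{1/2}`. -/
noncomputable def projDist (x y : V) : ℝ :=
  Real.sqrt (1 - ⟪x, y⟫ ^ 2 / (‖x‖ ^ 2 * ‖y‖ ^ 2))

/-- The distance `d(x̄, P(W))` from the line spanned by `x` to the projective space of the
submodule `W`. -/
noncomputable def projDistToSub (x : V) (W : Submodule ℝ V) : ℝ :=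
  sInf {r : ℝ | ∃ y : V, y ∈ W ∧ y ≠ 0 ∧ r = projDist x y}

/-- `κ(E₀,…,E_s)`: the minimal projective distance between nonzero vectors lying in sums of
disjoint subfamilies of the `E i`. -/
noncomputable def kappa {ι : Type*} (E : ι → Submodule ℝ V) : ℝ :=
  sInf {r : ℝ | ∃ (I J : Finset ι) (x y : V), I.Nonempty ∧ J.Nonempty ∧ Disjoint I J ∧
    x ∈ (⨆ i ∈ I, E i) ∧ x ≠ 0 ∧ y ∈ (⨆ j ∈ J, E j) ∧ y ≠ 0 ∧ r = projDist x y}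

/-- `Vⁱ = E_{i+1} ⊕ ⋯ ⊕ E_s`. -/
noncomputable def Vlow {s : ℕ} (E : Fin (s+1) → Submodule ℝ V) (i : ℕ) : Submodule ℝ V :=
  ⨆ j : Fin (s+1), ⨆ _ : i < (j : ℕ), E j

/-- `Wⁱ = E₀ ⊕ ⋯ ⊕ E_i`. -/
noncomputable def Whigh {s : ℕ} (E : Fin (s+1) → Submodule ℝ V) (i : ℕ) : Submodule ℝ V :=
  ⨆ j : Fin (s+1), ⨆ _ : (j : ℕ) ≤ i, E j

/-- `‖x ∧ y‖ = (|x|²|y|² − ⟨x,y⟫²)^{1/2}`, the area of the parallelogram spanned by `x, y`. -/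
noncomputable def wedgeNorm (x y : V) : ℝ :=
  Real.sqrt (‖x‖ ^ 2 * ‖y‖ ^ 2 - ⟪x, y⟫ ^ 2)

/-! ### Auxiliary lemmas on `projDist`. -/

lemma projDist_nonneg (x y : V) : 0 ≤ projDist x y := Real.sqrt_nonneg _

lemma projDist_le_one (x y : V) : projDist x y ≤ 1 := by
  unfold projDist
  have : 0 ≤ ⟪x, y⟫ ^ 2 / (‖x‖ ^ 2 * ‖y‖ ^ 2) := by positivity
  exact Real.sqrt_le_one.mpr (by linarith)

lemma projDist_comm (x y : V) : projDist x y = projDist y x := by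
  unfold projDist
  rw [real_inner_comm, mul_comm]

lemma projDist_smul_left' {c : ℝ} (hc : c ≠ 0) (x y : V) :
    projDist (c • x) y = projDist x y := by
  unfold projDist
  rw [real_inner_smul_left, norm_smul]
  congr 2
  rw [mul_pow, mul_pow, Real.norm_eq_abs, sq_abs, mul_assoc,
    mul_div_mul_left _ _ (pow_ne_zero 2 hc)]

lemma projDist_smul_right' {c : ℝ} (hc : c ≠ 0) (x y : V) :
    projDist x (c • y) = projDist x y := by
  rw [projDist_comm, projDist_smul_left' hc, projDist_comm]

lemma projDist_le_norm_sub_div (a b : V) (hb : b ≠ 0) :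
    projDist a b ≤ ‖a - b‖ / ‖b‖ := by
  have hbn : (0:ℝ) < ‖b‖ := norm_pos_iff.mpr hb
  rcases eq_or_ne a 0 with rfl | ha
  · simp only [projDist, inner_zero_left, norm_zero, zero_sub, norm_neg]
    rw [ne_eq, zero_pow (by norm_num), zero_mul, div_zero, sub_zero, Real.sqrt_one,
      div_self hbn.ne'] at *
  · have han : (0:ℝ) < ‖a‖ := norm_pos_iff.mpr ha
    have expand : ‖a - b‖ ^ 2 = ‖a‖^2 - 2 * ⟪a, b⟫ + ‖b‖^2 := by
      rw [← real_inner_self_eq_norm_sq, ← real_inner_self_eq_norm_sq,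
        ← real_inner_self_eq_norm_sq]
      simp only [inner_sub_left, inner_sub_right]
      rw [real_inner_comm b a]; ring
    have key : 1 - ⟪a, b⟫ ^ 2 / (‖a‖ ^ 2 * ‖b‖ ^ 2) ≤ (‖a - b‖ / ‖b‖) ^ 2 := by
      have h2 : 1 - ⟪a, b⟫ ^ 2 / (‖a‖ ^ 2 * ‖b‖ ^ 2)
          = (‖a‖ ^ 2 * ‖b‖ ^ 2 - ⟪a, b⟫ ^ 2) / (‖a‖ ^ 2 * ‖b‖ ^ 2) := by
        field_simp
      rw [h2, div_pow, div_le_div_iff₀ (by positivity) (by positivity)]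
      nlinarith [sq_nonneg (⟪a, b⟫ - ‖a‖ ^ 2), sq_nonneg ‖b‖, sq_nonneg (‖a‖*‖b‖)]
    calc projDist a b ≤ Real.sqrt ((‖a - b‖ / ‖b‖) ^ 2) := Real.sqrt_le_sqrt key
      _ = ‖a - b‖ / ‖b‖ := Real.sqrt_sq (by positivity)

/-! ### Orthogonal projection lemmas. -/

section Proj
variable [FiniteDimensional ℝ V]

lemma orthProj_orthogonal_eq_zero (U : Submodule ℝ V) {v : V} (hv : v ∈ U) :
    Submodule.orthogonalProjection Uᗮ v = 0 :=
  Submodule.orthogonalProjectionOnto_apply_of_mem_orthogonal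
    (U.le_orthogonal_orthogonal hv)

lemma norm_orthProj_orthogonal_le (U : Submodule ℝ V) (u : V) {z : V} (hz : z ∈ U) :
    ‖(Submodule.orthogonalProjection Uᗮ u : V)‖ ≤ ‖u - z‖ := by
  show ‖Uᗮ.starProjection u‖ ≤ _
  rw [Submodule.starProjection_orthogonal_val]
  set q : V := U.starProjection u with hq
  have horth : ⟪u - q, q - z⟫ = 0 :=
    Submodule.starProjection_inner_eq_zero u (q - z) (U.sub_mem (Submodule.orthogonalProjection U u).2 hz)
  have : ‖u - z‖ ^ 2 = ‖u - q‖ ^ 2 + ‖q - z‖ ^ 2 := by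
    have := norm_add_sq_real (u - q) (q - z)
    rw [horth] at this
    have h3 : u - q + (q - z) = u - z := by abel
    rw [h3] at this; linarith
  have h4 : ‖u - q‖ ^ 2 ≤ ‖u - z‖ ^ 2 := by nlinarith [sq_nonneg ‖q - z‖]
  calc ‖u - q‖ = Real.sqrt (‖u - q‖ ^ 2) := (Real.sqrt_sq (norm_nonneg _)).symm
    _ ≤ Real.sqrt (‖u - z‖ ^ 2) := Real.sqrt_le_sqrt h4
    _ = ‖u - z‖ := Real.sqrt_sq (norm_nonneg _)

lemma le_norm_orthProj_orthogonal (U : Submodule ℝ V) {u : V} (hu : u ≠ 0)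
    {c : ℝ} (hc1 : c ≤ 1)
    (h : ∀ q ∈ U, q ≠ 0 → c ≤ projDist u q) :
    c * ‖u‖ ≤ ‖(Submodule.orthogonalProjection Uᗮ u : V)‖ := by
  show _ ≤ ‖Uᗮ.starProjection u‖
  rw [Submodule.starProjection_orthogonal_val]
  set q : V := U.starProjection u with hq
  have hun : (0:ℝ) < ‖u‖ := norm_pos_iff.mpr hu
  rcases eq_or_ne q 0 with h0 | hqne
  · rw [h0, sub_zero]
    nlinarith
  · have hqn : (0:ℝ) < ‖q‖ := norm_pos_iff.mpr hqne
    have horth : ⟪u - q, q⟫ = 0 :=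
      Submodule.starProjection_inner_eq_zero u q (Submodule.orthogonalProjection U u).2
    have hinner : ⟪u, q⟫ = ‖q‖ ^ 2 := by
      have : ⟪u - q, q⟫ = ⟪u, q⟫ - ⟪q, q⟫ := inner_sub_left _ _ _
      rw [horth, real_inner_self_eq_norm_sq] at this
      linarith
    have hpyth : ‖u‖ ^ 2 = ‖u - q‖ ^ 2 + ‖q‖ ^ 2 := by
      have := norm_add_sq_real (u - q) q
      rw [horth] at this
      have h3 : u - q + q = u := by abel
      rw [h3] at this; linarith
    have hd : projDist u q = ‖u - q‖ / ‖u‖ := by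
      unfold projDist
      have : 1 - ⟪u, q⟫ ^ 2 / (‖u‖ ^ 2 * ‖q‖ ^ 2) = (‖u - q‖ / ‖u‖) ^ 2 := by
        rw [hinner]
        have h5 : ‖u - q‖ ^ 2 = ‖u‖ ^ 2 - ‖q‖ ^ 2 := by linarith
        field_simp
        rw [h5]
      rw [this, Real.sqrt_sq (by positivity)]
    have := h q (Submodule.orthogonalProjection U u).2 hqne
    rw [hd, le_div_iff₀ hun] at this
    linarith

lemma exists_pos_forall_le_projDist (A B : Submodule ℝ V) (hAB : Disjoint A B) :
    ∃ ε : ℝ, 0 < ε ∧ ∀ a ∈ A, a ≠ 0 → ∀ b ∈ B, b ≠ 0 → ε ≤ projDist a b := by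
  rcases eq_or_ne A ⊥ with rfl | hA
  · exact ⟨1, one_pos, fun a ha ha0 => absurd ((Submodule.mem_bot ℝ).mp ha) ha0⟩
  rcases eq_or_ne B ⊥ with rfl | hB
  · exact ⟨1, one_pos, fun a _ _ b hb hb0 => absurd ((Submodule.mem_bot ℝ).mp hb) hb0⟩
  obtain ⟨a₀, ha₀A, ha₀⟩ := Submodule.exists_mem_ne_zero_of_ne_bot hA
  obtain ⟨b₀, hb₀B, hb₀⟩ := Submodule.exists_mem_ne_zero_of_ne_bot hB
  set K : Set (V × V) :=
    (((A : Set V) ∩ Metric.sphere 0 1) ×ˢ ((B : Set V) ∩ Metric.sphere 0 1)) with hK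
  have hclosed : ∀ C : Submodule ℝ V, IsClosed ((C : Set V) ∩ Metric.sphere 0 1) :=
    fun C => (Submodule.closed_of_finiteDimensional C).inter Metric.isClosed_sphere
  have hcpt : IsCompact K := by
    apply IsCompact.prod <;>
    · rw [Metric.isCompact_iff_isClosed_bounded]
      exact ⟨hclosed _, Metric.isBounded_sphere.subset Set.inter_subset_right⟩
  have hmemK : ∀ (C : Submodule ℝ V) (v : V), v ∈ C → v ≠ 0 →
      (‖v‖⁻¹ • v) ∈ (C : Set V) ∩ Metric.sphere 0 1 := by
    intro C v hv hv0
    refine ⟨C.smul_mem _ hv, ?_⟩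
    rw [mem_sphere_zero_iff_norm]
    exact norm_smul_inv_norm hv0
  have hne : K.Nonempty := ⟨(‖a₀‖⁻¹ • a₀, ‖b₀‖⁻¹ • b₀),
    Set.mk_mem_prod (hmemK A a₀ ha₀A ha₀) (hmemK B b₀ hb₀B hb₀)⟩
  have hcont : Continuous fun p : V × V => ⟪p.1, p.2⟫ ^ 2 := continuous_inner.pow 2
  obtain ⟨p₀, hp₀K, hmax⟩ := hcpt.exists_isMaxOn hne hcont.continuousOn
  set M : ℝ := ⟪p₀.1, p₀.2⟫ ^ 2 with hM
  obtain ⟨⟨hp1A, hp1s⟩, ⟨hp2B, hp2s⟩⟩ := hp₀K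
  have hn1 : ‖p₀.1‖ = 1 := mem_sphere_zero_iff_norm.mp hp1s
  have hn2 : ‖p₀.2‖ = 1 := mem_sphere_zero_iff_norm.mp hp2s
  have hM1 : M < 1 := by
    rcases lt_or_eq_of_le (show M ≤ 1 by
      have := abs_real_inner_le_norm p₀.1 p₀.2
      rw [hn1, hn2, mul_one] at this
      nlinarith [abs_nonneg ⟪p₀.1, p₀.2⟫, sq_abs ⟪p₀.1, p₀.2⟫]) with h | h
    · exact h
    · exfalso
      have habs : |⟪p₀.1, p₀.2⟫ / (‖p₀.1‖ * ‖p₀.2‖)| = 1 := by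
        rw [hn1, hn2, mul_one, div_one]
        have h2 : (⟪p₀.1, p₀.2⟫ - 1) * (⟪p₀.1, p₀.2⟫ + 1) = 0 := by nlinarith
        rcases mul_eq_zero.mp h2 with h3 | h3
        · rw [show ⟪p₀.1, p₀.2⟫ = 1 by linarith]; simp
        · rw [show ⟪p₀.1, p₀.2⟫ = -1 by linarith]; simp
      obtain ⟨hne1, r, hr0, hrel⟩ :=
        (abs_real_inner_div_norm_mul_norm_eq_one_iff p₀.1 p₀.2).mp habs
      have : p₀.2 ∈ A := by rw [hrel]; exact A.smul_mem r hp1A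
      have h0 : p₀.2 = 0 := (Submodule.disjoint_def.mp hAB) p₀.2 this hp2B
      rw [h0, norm_zero] at hn2; norm_num at hn2
  refine ⟨Real.sqrt (1 - M), Real.sqrt_pos.mpr (by linarith), ?_⟩
  intro a haA ha0 b hbB hb0
  have hna : ‖(‖a‖⁻¹ • a)‖ = 1 := norm_smul_inv_norm ha0
  have hnb : ‖(‖b‖⁻¹ • b)‖ = 1 := norm_smul_inv_norm hb0
  have h1 : projDist a b = projDist (‖a‖⁻¹ • a) (‖b‖⁻¹ • b) := by
    rw [projDist_smul_left' (inv_ne_zero (norm_ne_zero_iff.mpr ha0)),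
      projDist_smul_right' (inv_ne_zero (norm_ne_zero_iff.mpr hb0))]
  rw [h1]
  unfold projDist
  apply Real.sqrt_le_sqrt
  have hle : ⟪(‖a‖⁻¹ • a), (‖b‖⁻¹ • b)⟫ ^ 2 ≤ M :=
    isMaxOn_iff.mp hmax _ (Set.mk_mem_prod (hmemK A a haA ha0) (hmemK B b hbB hb0))
  rw [hna, hnb]
  norm_num
  linarith

end Proj

/-! ### Components of an internal direct sum. -/

section Components
variable {ι : Type*} [Fintype ι] {E : ι → Submodule ℝ V} (hind : iSupIndep E)
  {L : ι → V →ₗ[ℝ] V} (hL1 : ∀ x : V, ∑ k, L k x = x) (hL2 : ∀ k x, L k x ∈ E k)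

include hind hL1 hL2 in
lemma L_eq_zero_of_mem_ne {j : ι} {v : V} (hv : v ∈ E j) {k : ι} (hk : k ≠ j) :
    L k v = 0 := by
  classical
  have hmem2 : L k v ∈ ⨆ m, ⨆ _ : m ≠ k, E m := by
    have hsum : L k v = v - ∑ m ∈ Finset.univ.erase k, L m v := by
      have := hL1 v
      rw [← Finset.add_sum_erase _ _ (Finset.mem_univ k)] at this
      rw [eq_sub_iff_add_eq, this]
    rw [hsum]
    apply Submodule.sub_mem
    · exact Submodule.mem_iSup_of_mem j (Submodule.mem_iSup_of_mem hk.symm hv)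
    · apply Submodule.sum_mem
      intro m hm
      have hmk : m ≠ k := (Finset.mem_erase.mp hm).1
      exact Submodule.mem_iSup_of_mem m (Submodule.mem_iSup_of_mem hmk (hL2 m v))
  exact (Submodule.disjoint_def.mp (hind k)) _ (hL2 k v) hmem2

include hind hL1 hL2 in
lemma L_eq_zero_of_mem_biSup {I : Finset ι} {x : V} (hx : x ∈ ⨆ i ∈ I, E i)
    {k : ι} (hk : k ∉ I) : L k x = 0 := by
  have hle : (⨆ i ∈ I, E i) ≤ LinearMap.ker (L k) := by
    apply iSup₂_le
    intro i hi v hv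
    exact LinearMap.mem_ker.mpr (L_eq_zero_of_mem_ne hind hL1 hL2 hv
      (fun h => hk (h ▸ hi)))
  exact LinearMap.mem_ker.mp (hle hx)

include hind hL1 hL2 in
lemma disjoint_biSup_of_disjoint {I J : Finset ι} (hIJ : Disjoint I J) :
    Disjoint (⨆ i ∈ I, E i) (⨆ j ∈ J, E j) := by
  rw [Submodule.disjoint_def]
  intro x hxI hxJ
  have : ∀ k, L k x = 0 := by
    intro k
    by_cases hk : k ∈ I
    · exact L_eq_zero_of_mem_biSup hind hL1 hL2 hxJ (Finset.disjoint_left.mp hIJ hk)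
    · exact L_eq_zero_of_mem_biSup hind hL1 hL2 hxI hk
  rw [← hL1 x]
  simp [this]

end Components

/-! ### Bounds on `kappa`. -/

lemma kappa_le_projDist {ι : Type*} (E : ι → Submodule ℝ V) {I J : Finset ι} {a b : V}
    (hI : I.Nonempty) (hJ : J.Nonempty) (hIJ : Disjoint I J)
    (ha : a ∈ ⨆ i ∈ I, E i) (ha0 : a ≠ 0) (hb : b ∈ ⨆ j ∈ J, E j) (hb0 : b ≠ 0) :
    kappa E ≤ projDist a b := by
  apply csInf_le
  · refine ⟨0, ?_⟩
    rintro r ⟨I', J', x', y', -, -, -, -, -, -, -, rfl⟩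
    exact projDist_nonneg _ _
  · exact ⟨I, J, a, b, hI, hJ, hIJ, ha, ha0, hb, hb0, rfl⟩

lemma kappa_pos [FiniteDimensional ℝ V] {ι : Type*} [Fintype ι] [DecidableEq ι]
    {E : ι → Submodule ℝ V} (hind : iSupIndep E)
    {L : ι → V →ₗ[ℝ] V} (hL1 : ∀ x : V, ∑ k, L k x = x) (hL2 : ∀ k x, L k x ∈ E k)
    {i0 j0 : ι} (hij : i0 ≠ j0) (hi0 : E i0 ≠ ⊥) (hj0 : E j0 ≠ ⊥) :
    0 < kappa E := by
  obtain ⟨x₀, hx₀m, hx₀⟩ := Submodule.exists_mem_ne_zero_of_ne_bot hi0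
  obtain ⟨y₀, hy₀m, hy₀⟩ := Submodule.exists_mem_ne_zero_of_ne_bot hj0
  have hpair : ∀ p : Finset ι × Finset ι, ∃ ε : ℝ, 0 < ε ∧
      ∀ a ∈ ⨆ i ∈ p.1, E i, a ≠ 0 → ∀ b ∈ ⨆ j ∈ p.2, E j, b ≠ 0 →
        Disjoint p.1 p.2 → ε ≤ projDist a b := by
    intro p
    by_cases hd : Disjoint p.1 p.2
    · obtain ⟨ε, h1, h2⟩ := exists_pos_forall_le_projDist _ _
        (disjoint_biSup_of_disjoint hind hL1 hL2 hd)
      exact ⟨ε, h1, fun a ha ha0 b hb hb0 _ => h2 a ha ha0 b hb hb0⟩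
    · exact ⟨1, one_pos, fun a _ _ b _ _ hd' => absurd hd' hd⟩
  choose f hf0 hf using hpair
  haveI : Nonempty (Finset ι × Finset ι) := ⟨(∅, ∅)⟩
  set ε₀ := Finset.univ.inf' Finset.univ_nonempty f with hε₀def
  have hε₀ : 0 < ε₀ := by
    rw [hε₀def, Finset.lt_inf'_iff]
    exact fun p _ => hf0 p
  have hSne : ∃ r, r ∈ {r : ℝ | ∃ (I J : Finset ι) (x y : V),
      I.Nonempty ∧ J.Nonempty ∧ Disjoint I J ∧
      x ∈ (⨆ i ∈ I, E i) ∧ x ≠ 0 ∧ y ∈ (⨆ j ∈ J, E j) ∧ y ≠ 0 ∧ r = projDist x y} := by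
    refine ⟨projDist x₀ y₀, {i0}, {j0}, x₀, y₀, Finset.singleton_nonempty _,
      Finset.singleton_nonempty _, Finset.disjoint_singleton.mpr hij,
      Submodule.mem_iSup_of_mem i0 (Submodule.mem_iSup_of_mem (Finset.mem_singleton_self i0) hx₀m),
      hx₀,
      Submodule.mem_iSup_of_mem j0 (Submodule.mem_iSup_of_mem (Finset.mem_singleton_self j0) hy₀m),
      hy₀, rfl⟩
  refine lt_of_lt_of_le hε₀ (le_csInf hSne ?_)
  rintro r ⟨I, J, a, b, hI, hJ, hIJ, ha, ha0, hb, hb0, rfl⟩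
  exact le_trans (Finset.inf'_le f (Finset.mem_univ (I, J)))
    (hf (I, J) a ha ha0 b hb hb0 hIJ)

set_option maxHeartbeats 1000000 in
/-- Lemma 5.2 of the paper. If `x̄, ȳ ∈ P(V) ∖ P(V⁰)` agree in the
coordinates `g⁰,…,g^{i−1}` and `|gⁱ(x̄) − gⁱ(ȳ)| ≤ r`, then
`d(P_{(Vⁱ)^⊥} x̄, P_{(Vⁱ)^⊥} ȳ) ≤ s³ · 2^{3+s} · ‖g(x̄)‖_∞ · κ^{-2s-2} · r`. -/
theorem stmt9 [FiniteDimensional ℝ V] (hdim : 2 ≤ Module.finrank ℝ V)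
    (s : ℕ) (hs : 1 ≤ s) (E : Fin (s+1) → Submodule ℝ V)
    (hE : DirectSum.IsInternal E) (hEne : ∀ k, E k ≠ ⊥)
    (hE0 : Module.finrank ℝ (E 0) = 1)
    (L : Fin (s+1) → V →ₗ[ℝ] V)
    (hL1 : ∀ x : V, ∑ k, L k x = x) (hL2 : ∀ k x, L k x ∈ E k)
    (u₀ : V) (hu₀ : u₀ ∈ E 0) (hu₀n : ‖u₀‖ = 1)
    (f₀ : V →ₗ[ℝ] ℝ) (hf₀ : ∀ x, L 0 x = f₀ x • u₀)
    (i : ℕ) (hi1 : 1 ≤ i) (hi2 : i ≤ s)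
    (x y : V) (hx : x ≠ 0) (hy : y ≠ 0) (hfx : f₀ x ≠ 0) (hfy : f₀ y ≠ 0)
    (r : ℝ) (hr : 0 < r)
    (hgk : ∀ k : Fin (s+1), (k : ℕ) < i → (f₀ x)⁻¹ • L k x = (f₀ y)⁻¹ • L k y)
    (hgi : ‖(f₀ x)⁻¹ • L ⟨i, by omega⟩ x - (f₀ y)⁻¹ • L ⟨i, by omega⟩ y‖ ≤ r) :
    projDist (Submodule.orthogonalProjection (Vlow E i)ᗮ x : V)
        (Submodule.orthogonalProjection (Vlow E i)ᗮ y : V) ≤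
      (s : ℝ) ^ 3 * 2 ^ (3 + s) *
        (Finset.univ.sup' Finset.univ_nonempty fun k => ‖(f₀ x)⁻¹ • L k x‖) *
        (kappa E ^ (2 * s + 2))⁻¹ * r := by
  classical
  have hind : iSupIndep E := hE.submodule_iSupIndep
  have hu₀0 : u₀ ≠ 0 := by
    intro h; rw [h, norm_zero] at hu₀n; norm_num at hu₀n
  -- the index `i` as an element of `Fin (s+1)`
  set i' : Fin (s+1) := ⟨i, by omega⟩ with hi'
  -- κ and its bounds
  set κ : ℝ := kappa E with hκdef
  have hone : ((1 : Fin (s+1)) : ℕ) = 1 := by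
    rw [Fin.val_one', Nat.mod_eq_of_lt (by omega)]
  have h01 : (0 : Fin (s+1)) ≠ (1 : Fin (s+1)) := by
    intro h
    have := congrArg (Fin.val) h
    rw [hone] at this
    simp at this
  have hκ0 : 0 < κ := kappa_pos hind hL1 hL2 h01 (hEne 0) (hEne 1)
  have hκ1 : κ ≤ 1 := by
    obtain ⟨x₀, hx₀m, hx₀⟩ := Submodule.exists_mem_ne_zero_of_ne_bot (hEne 0)
    obtain ⟨y₀, hy₀m, hy₀⟩ := Submodule.exists_mem_ne_zero_of_ne_bot (hEne 1)
    refine le_trans (kappa_le_projDist E (I := {0}) (J := {1})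
      (Finset.singleton_nonempty _) (Finset.singleton_nonempty _)
      (Finset.disjoint_singleton.mpr h01)
      (Submodule.mem_iSup_of_mem 0
        (Submodule.mem_iSup_of_mem (Finset.mem_singleton_self 0) hx₀m)) hx₀
      (Submodule.mem_iSup_of_mem 1
        (Submodule.mem_iSup_of_mem (Finset.mem_singleton_self 1) hy₀m)) hy₀)
      (projDist_le_one _ _)
  -- the projection onto `(Vⁱ)ᗮ` as a linear endomorphism of `V`
  set Q : V →ₗ[ℝ] V :=
    ((Vlow E i)ᗮ.subtype).comp (Submodule.orthogonalProjection (Vlow E i)ᗮ).toLinearMap with hQdef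
  have hQ : ∀ v : V, Q v = (Submodule.orthogonalProjection (Vlow E i)ᗮ v : V) := fun v => rfl
  have hQnorm : ∀ v : V, ‖Q v‖ ≤ ‖v‖ := by
    intro v
    rw [hQ]
    have h1 : ‖Submodule.orthogonalProjection (Vlow E i)ᗮ v‖ ≤ 1 * ‖v‖ :=
      (Submodule.orthogonalProjection (Vlow E i)ᗮ).le_of_opNorm_le (Submodule.orthogonalProjection_norm_le _) v
    simpa using h1
  have hQkill : ∀ v ∈ Vlow E i, Q v = 0 := by
    intro v hv
    rw [hQ]
    rw [orthProj_orthogonal_eq_zero (Vlow E i) hv]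
    rfl
  -- normalized representatives
  set a : V := (f₀ x)⁻¹ • x with ha
  set b : V := (f₀ y)⁻¹ • y with hb
  have ha0 : a ≠ 0 := smul_ne_zero (inv_ne_zero hfx) hx
  have hb0 : b ≠ 0 := smul_ne_zero (inv_ne_zero hfy) hy
  have hLa : ∀ k, L k a = (f₀ x)⁻¹ • L k x := fun k => map_smul (L k) _ x
  have hLb : ∀ k, L k b = (f₀ y)⁻¹ • L k y := fun k => map_smul (L k) _ y
  have hfa : f₀ a = 1 := by rw [ha, map_smul, smul_eq_mul, inv_mul_cancel₀ hfx]
  have hfb : f₀ b = 1 := by rw [hb, map_smul, smul_eq_mul, inv_mul_cancel₀ hfy]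
  -- reduction of the LHS to `projDist (Q a) (Q b)`
  have hlhs : projDist (Submodule.orthogonalProjection (Vlow E i)ᗮ x : V)
      (Submodule.orthogonalProjection (Vlow E i)ᗮ y : V) = projDist (Q a) (Q b) := by
    have h1 : Q a = (f₀ x)⁻¹ • (Submodule.orthogonalProjection (Vlow E i)ᗮ x : V) := by
      rw [ha, map_smul, hQ]
    have h2 : Q b = (f₀ y)⁻¹ • (Submodule.orthogonalProjection (Vlow E i)ᗮ y : V) := by
      rw [hb, map_smul, hQ]
    rw [h1, h2, projDist_smul_left' (inv_ne_zero hfx), projDist_smul_right' (inv_ne_zero hfy)]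
  -- the difference bound
  have hdiffmem : ∀ k : Fin (s+1), k ≠ i' → Q (L k a - L k b) = 0 := by
    intro k hk
    rcases lt_or_gt_of_ne (fun h : (k : ℕ) = i => hk (Fin.ext (by rw [h]))) with hki | hki
    · rw [hLa, hLb, hgk k hki, sub_self, map_zero]
    · apply hQkill
      apply Submodule.sub_mem <;>
        exact Submodule.mem_iSup_of_mem k (Submodule.mem_iSup_of_mem hki (hL2 k _))
  have hQab : ‖Q a - Q b‖ ≤ r := by
    have hsplit : a - b = ∑ k, (L k a - L k b) := by
      rw [Finset.sum_sub_distrib, hL1 a, hL1 b]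
    have h1 : Q a - Q b = ∑ k, Q (L k a - L k b) := by
      rw [← map_sub, hsplit, map_sum]
    have h2 : ∑ k, Q (L k a - L k b) = Q (L i' a - L i' b) :=
      Finset.sum_eq_single i' (fun k _ hk => hdiffmem k hk) (fun h => absurd (Finset.mem_univ _) h)
    rw [h1, h2]
    refine le_trans (hQnorm _) ?_
    rw [hLa, hLb]
    exact hgi
  -- lower bound for ‖Q b‖
  set I₁ : Finset (Fin (s+1)) := Finset.univ.filter (fun k => (k : ℕ) ≤ i) with hI₁
  set J₁ : Finset (Fin (s+1)) := Finset.univ.filter (fun k => ¬ (k : ℕ) ≤ i) with hJ₁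
  have hI₁J₁ : Disjoint I₁ J₁ := Finset.disjoint_filter_filter_not _ _ _
  have h0I₁ : (0 : Fin (s+1)) ∈ I₁ := by
    rw [hI₁, Finset.mem_filter]
    exact ⟨Finset.mem_univ _, by simp⟩
  set w : V := ∑ k ∈ I₁, L k b with hw
  set v : V := ∑ k ∈ J₁, L k b with hv
  have hwv : w + v = b := by
    rw [hw, hv, Finset.sum_filter_add_sum_filter_not, hL1]
  have hvmem : v ∈ Vlow E i := by
    apply Submodule.sum_mem
    intro k hk
    rw [hJ₁, Finset.mem_filter] at hk
    exact Submodule.mem_iSup_of_mem k (Submodule.mem_iSup_of_mem (by omega) (hL2 k b))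
  have hQbw : Q b = Q w := by
    rw [← hwv, map_add, hQkill v hvmem, add_zero]
  have hL0b : L 0 b = u₀ := by rw [hf₀ b, hfb, one_smul]
  set c : V := ∑ k ∈ I₁.erase 0, L k b with hc
  have hwc : w = u₀ + c := by
    rw [hw, hc, ← Finset.add_sum_erase _ _ h0I₁, hL0b]
  set U : Submodule ℝ V := ⨆ k ∈ I₁.erase 0, E k with hU
  have hcU : c ∈ U := by
    apply Submodule.sum_mem
    intro k hk
    exact Submodule.mem_iSup_of_mem k (Submodule.mem_iSup_of_mem hk (hL2 k b))
  have hone' : ((1 : Fin (s+1)) : ℕ) ≤ i := by rw [hone]; omega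
  have herasene : (I₁.erase 0).Nonempty := by
    refine ⟨1, Finset.mem_erase.mpr ⟨h01.symm, ?_⟩⟩
    rw [hI₁, Finset.mem_filter]
    exact ⟨Finset.mem_univ _, hone'⟩
  have hu₀mem : u₀ ∈ ⨆ k ∈ ({0} : Finset (Fin (s+1))), E k :=
    Submodule.mem_iSup_of_mem 0 (Submodule.mem_iSup_of_mem (Finset.mem_singleton_self 0) hu₀)
  have hUk : ∀ q ∈ U, q ≠ 0 → κ ≤ projDist u₀ q := by
    intro q hq hq0
    refine kappa_le_projDist E (Finset.singleton_nonempty _) herasene ?_ hu₀mem hu₀0 hq hq0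
    rw [Finset.disjoint_singleton_left]
    exact Finset.notMem_erase 0 I₁
  have hwκ : κ ≤ ‖w‖ := by
    have h1 : κ * ‖u₀‖ ≤ ‖(Submodule.orthogonalProjection Uᗮ u₀ : V)‖ :=
      le_norm_orthProj_orthogonal U hu₀0 hκ1 hUk
    have h2 : ‖(Submodule.orthogonalProjection Uᗮ u₀ : V)‖ ≤ ‖u₀ - (-c)‖ :=
      norm_orthProj_orthogonal_le U u₀ (U.neg_mem hcU)
    rw [hu₀n, mul_one] at h1
    rw [sub_neg_eq_add, ← hwc] at h2
    exact le_trans h1 h2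
  have hw0 : w ≠ 0 := by
    intro h; rw [h, norm_zero] at hwκ; linarith
  have hwmem : w ∈ ⨆ k ∈ I₁, E k := by
    apply Submodule.sum_mem
    intro k hk
    exact Submodule.mem_iSup_of_mem k (Submodule.mem_iSup_of_mem hk (hL2 k b))
  have hVlowle : Vlow E i ≤ ⨆ k ∈ J₁, E k := by
    apply iSup_le
    intro j
    apply iSup_le
    intro hj
    refine le_trans ?_ (le_refl _)
    exact le_iSup_of_le j (le_iSup_of_le (by rw [hJ₁, Finset.mem_filter]; exact ⟨Finset.mem_univ _, by omega⟩) le_rfl)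
  have hVlowκ : ∀ q ∈ Vlow E i, q ≠ 0 → κ ≤ projDist w q := by
    intro q hq hq0
    rcases J₁.eq_empty_or_nonempty with hJe | hJne
    · exfalso
      have : q ∈ (⊥ : Submodule ℝ V) := by
        have h2 := hVlowle hq
        rw [hJe] at h2
        simpa using h2
      exact hq0 ((Submodule.mem_bot ℝ).mp this)
    · exact kappa_le_projDist E ⟨0, h0I₁⟩ hJne hI₁J₁ hwmem hw0 (hVlowle hq) hq0
  have hQw : κ * ‖w‖ ≤ ‖Q w‖ := by
    rw [hQ]
    exact le_norm_orthProj_orthogonal (Vlow E i) hw0 hκ1 hVlowκ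
  have hQbκ : κ ^ 2 ≤ ‖Q b‖ := by
    rw [hQbw]
    calc κ ^ 2 = κ * κ := sq κ
      _ ≤ κ * ‖w‖ := by nlinarith
      _ ≤ ‖Q w‖ := hQw
  have hQb0 : Q b ≠ 0 := by
    intro h
    rw [h, norm_zero] at hQbκ
    nlinarith
  -- main estimate
  have hmain : projDist (Q a) (Q b) ≤ r / κ ^ 2 := by
    refine le_trans (projDist_le_norm_sub_div _ _ hQb0) ?_
    exact div_le_div₀ hr.le hQab (by positivity) hQbκ
  rw [hlhs]
  refine le_trans hmain ?_
  -- comparison of the two bounds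
  set M : ℝ := Finset.univ.sup' Finset.univ_nonempty (fun k : Fin (s+1) => ‖(f₀ x)⁻¹ • L k x‖) with hM
  have hM1 : 1 ≤ M := by
    have h1 : ‖(f₀ x)⁻¹ • L 0 x‖ = 1 := by
      rw [hf₀ x, smul_smul, inv_mul_cancel₀ hfx, one_smul, hu₀n]
    rw [hM, ← h1]
    exact Finset.le_sup' (fun k : Fin (s+1) => ‖(f₀ x)⁻¹ • L k x‖) (Finset.mem_univ 0)
  have hs3 : (1:ℝ) ≤ (s : ℝ) ^ 3 := one_le_pow₀ (by exact_mod_cast hs)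
  have h2s : (1:ℝ) ≤ 2 ^ (3 + s) := one_le_pow₀ one_le_two
  have hκpow : κ ^ (2 * s + 2) ≤ κ ^ 2 :=
    pow_le_pow_of_le_one hκ0.le hκ1 (by omega)
  have hκppos : (0:ℝ) < κ ^ (2 * s + 2) := pow_pos hκ0 _
  have hinv : (κ ^ 2)⁻¹ ≤ (κ ^ (2 * s + 2))⁻¹ := by
    apply inv_anti₀ hκppos hκpow
  calc r / κ ^ 2 = (κ ^ 2)⁻¹ * r := by rw [div_eq_mul_inv, mul_comm]
    _ ≤ (κ ^ (2 * s + 2))⁻¹ * r := mul_le_mul_of_nonneg_right hinv hr.le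
    _ = 1 * ((κ ^ (2 * s + 2))⁻¹ * r) := (one_mul _).symm
    _ ≤ ((s : ℝ) ^ 3 * 2 ^ (3 + s) * M) * ((κ ^ (2 * s + 2))⁻¹ * r) := by
        apply mul_le_mul_of_nonneg_right _ (by positivity)
        have hA : (1:ℝ) ≤ (s:ℝ)^3 * 2^(3+s) := by nlinarith
        nlinarith
    _ = (s : ℝ) ^ 3 * 2 ^ (3 + s) * M * (κ ^ (2 * s + 2))⁻¹ * r := by ring
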